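/- Let W be the complex Lie algebra with basis {L_n : n ∈ ℤ} and bracket [L_m, L_n] = (m−n) L_{m+n}, and let ω be the bilinear form with ω(L_m, L_n) = δ_{m+n,0}(m³ − m). Then for every 2-cocycle c on W (an alternating bilinear map c : W × W → ℂ with c([x,y],z) + c([y,z],x) + c([z,x],y) = 0) there exist a unique scalar λ ∈ ℂ and a unique linear functional f : W → ℂ such that c(x,y) = λ·ω(x,y) + f([x,y]) for all x, y ∈ W. In particular, the second cohomology H²(W; ℂ) is one-dimensional, and the Virasoro algebra is the unique nontrivial one-dimensional central extension of W up to isomorphism. -/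
import Mathlib


/-- The Witt algebra bracket on the `ℂ`-vector space `W` with basis `{L_n : n ∈ ℤ}`
(modeled as `ℤ →₀ ℂ`, `L_n = Finsupp.single n 1`), the bilinear map determined by
`[L_m, L_n] = (m − n) L_{m+n}`. -/
noncomputable def wittBracket : (ℤ →₀ ℂ) →ₗ[ℂ] (ℤ →₀ ℂ) →ₗ[ℂ] (ℤ →₀ ℂ) :=
  Finsupp.lsum ℂ fun m => LinearMap.toSpanSingleton ℂ _
    (Finsupp.lsum ℂ fun n => ((m : ℂ) - (n : ℂ)) • Finsupp.lsingle (m + n))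

/-- The Virasoro cocycle `ω` on the Witt algebra, the bilinear form determined by
`ω(L_m, L_n) = (m³ − m)` if `m + n = 0` and `ω(L_m, L_n) = 0` otherwise. -/
noncomputable def virOmega : (ℤ →₀ ℂ) →ₗ[ℂ] (ℤ →₀ ℂ) →ₗ[ℂ] ℂ :=
  Finsupp.lsum ℂ fun m => LinearMap.toSpanSingleton ℂ _
    (Finsupp.lsum ℂ fun n =>
      LinearMap.toSpanSingleton ℂ ℂ (if m + n = 0 then ((m ^ 3 - m : ℤ) : ℂ) else 0))


lemma wb_single (m n : ℤ) : wittBracket (Finsupp.single m 1) (Finsupp.single n 1)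
    = ((m:ℂ) - n) • Finsupp.single (m+n) 1 := by
  simp only [wittBracket, Finsupp.lsum_single, LinearMap.toSpanSingleton_apply,
    one_smul, LinearMap.smul_apply, Finsupp.lsingle_apply]

lemma om_single (m n : ℤ) : virOmega (Finsupp.single m 1) (Finsupp.single n 1)
    = if m + n = 0 then ((m ^ 3 - m : ℤ) : ℂ) else 0 := by
  simp only [virOmega, Finsupp.lsum_single, LinearMap.toSpanSingleton_apply,
    one_smul, smul_eq_mul, mul_one, one_mul]

lemma coeff_lemma (Cc : ℤ → ℤ → ℂ)
    (hCs : ∀ m n : ℤ, Cc n m = - Cc m n)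
    (hc3 : ∀ m n p : ℤ, ((m:ℂ)-n) * Cc (m+n) p + ((n:ℂ)-p) * Cc (n+p) m
      + ((p:ℂ)-m) * Cc (p+m) n = 0) :
    ∃ (lam : ℂ) (F : ℤ → ℂ),
      ∀ m n : ℤ, Cc m n
        = lam * (if m + n = 0 then ((m ^ 3 - m : ℤ) : ℂ) else 0) + ((m:ℂ) - n) * F (m+n) := by
  refine ⟨(Cc 2 (-2) - 2 * Cc 1 (-1)) / 6,
    fun k => if k = 0 then Cc 1 (-1) / 2 else Cc k 0 / (k : ℂ), ?_⟩
  set lam : ℂ := (Cc 2 (-2) - 2 * Cc 1 (-1)) / 6 with hlam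
  have hA0 : Cc 0 0 = 0 := by linear_combination (hCs 0 0) / 2
  -- recursion on the diagonal
  have hrk : ∀ k : ℤ, ((k:ℂ) - 1) * Cc (k+1) (-(k+1))
      = ((k:ℂ) + 2) * Cc k (-k) - (2*(k:ℂ) + 1) * Cc 1 (-1) := by
    intro k
    have h := hc3 k 1 (-(k+1))
    have e1 : (1:ℤ) + -(k+1) = -k := by ring
    have e2 : -(k+1) + k = -1 := by ring
    rw [e1, e2, hCs k (-k), hCs 1 (-1)] at h
    push_cast at h
    linear_combination h
  have keyN : ∀ k : ℕ, 2 ≤ k →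
      Cc (k:ℤ) (-(k:ℤ)) = lam * ((k:ℂ)^3 - k) + Cc 1 (-1) * k := by
    intro k hk
    induction k, hk using Nat.le_induction with
    | base => push_cast; rw [hlam]; ring
    | succ k hk ih =>
      have h := hrk (k:ℤ)
      rw [ih] at h
      have hne : (k:ℂ) - 1 ≠ 0 := by
        have : (k:ℂ) ≠ 1 := by exact_mod_cast (by omega : k ≠ 1)
        exact sub_ne_zero.mpr this
      push_cast
      apply mul_left_cancel₀ hne
      push_cast at h
      linear_combination h
  have keyN' : ∀ k : ℕ, Cc (k:ℤ) (-(k:ℤ)) = lam * ((k:ℂ)^3 - k) + Cc 1 (-1) * k := by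
    intro k
    match k with
    | 0 => simpa using hA0
    | 1 => norm_num
    | (k+2) => exact keyN (k+2) (by omega)
  have hdiag : ∀ m : ℤ, Cc m (-m) = lam * ((m:ℂ)^3 - m) + Cc 1 (-1) * m := by
    intro m
    rcases le_or_gt 0 m with hm | hm
    · obtain ⟨k, rfl⟩ : ∃ k : ℕ, m = (k:ℤ) := ⟨m.toNat, (Int.toNat_of_nonneg hm).symm⟩
      have := keyN' k
      push_cast
      push_cast at this
      exact this
    · obtain ⟨k, rfl⟩ : ∃ k : ℕ, m = -(k:ℤ) := ⟨(-m).toNat, by omega⟩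
      rw [neg_neg, hCs (k:ℤ) (-(k:ℤ))]
      have := keyN' k
      push_cast
      push_cast at this
      linear_combination -this
  intro m n
  by_cases h0 : m + n = 0
  · have hn : n = -m := by omega
    subst hn
    simp only [if_pos h0]
    push_cast
    linear_combination hdiag m
  · simp only [if_neg h0]
    have h := hc3 m n 0
    rw [add_zero, zero_add, hCs m n] at h
    have hne : ((m+n : ℤ) : ℂ) ≠ 0 := Int.cast_ne_zero.mpr h0
    push_cast at h hne ⊢
    field_simp
    linear_combination -h

/-- Every 2-cocycle `c` on the Witt algebra (an alternating bilinear form satisfying the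
cocycle identity) is cohomologous to a unique multiple of the Virasoro cocycle `ω`:
there exist a unique scalar `λ ∈ ℂ` and a unique linear functional `f` such that
`c(x,y) = λ·ω(x,y) + f([x,y])` for all `x, y`. In particular `H²(W;ℂ)` is one-dimensional
and the Virasoro algebra is the unique nontrivial one-dimensional central extension. -/
theorem witt_second_cohomology_one_dimensional
    (c : (ℤ →₀ ℂ) →ₗ[ℂ] (ℤ →₀ ℂ) →ₗ[ℂ] ℂ)
    (halt : ∀ x : ℤ →₀ ℂ, c x x = 0)
    (hcoc : ∀ x y z : ℤ →₀ ℂ,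
      c (wittBracket x y) z + c (wittBracket y z) x + c (wittBracket z x) y = 0) :
    ∃! lf : ℂ × ((ℤ →₀ ℂ) →ₗ[ℂ] ℂ),
      ∀ x y : ℤ →₀ ℂ, c x y = lf.1 * virOmega x y + lf.2 (wittBracket x y) := by
  have hCs : ∀ m n : ℤ, c (Finsupp.single n 1) (Finsupp.single m 1)
      = - c (Finsupp.single m 1) (Finsupp.single n 1) := by
    intro m n
    have h := halt (Finsupp.single m 1 + Finsupp.single n 1)
    simp only [map_add, LinearMap.add_apply, halt] at h
    linear_combination h
  have hc3 : ∀ m n p : ℤ,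
      ((m:ℂ)-n) * c (Finsupp.single (m+n) 1) (Finsupp.single p 1)
      + ((n:ℂ)-p) * c (Finsupp.single (n+p) 1) (Finsupp.single m 1)
      + ((p:ℂ)-m) * c (Finsupp.single (p+m) 1) (Finsupp.single n 1) = 0 := by
    intro m n p
    have h := hcoc (Finsupp.single m 1) (Finsupp.single n 1) (Finsupp.single p 1)
    rw [wb_single, wb_single, wb_single] at h
    simpa only [map_smul, LinearMap.smul_apply, smul_eq_mul] using h
  obtain ⟨lam, F, hmain⟩ :=
    coeff_lemma (fun m n => c (Finsupp.single m 1) (Finsupp.single n 1)) hCs hc3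
  set f : (ℤ →₀ ℂ) →ₗ[ℂ] ℂ :=
    Finsupp.lsum ℂ fun k => LinearMap.toSpanSingleton ℂ ℂ (F k) with hfdef
  have hf : ∀ k : ℤ, f (Finsupp.single k 1) = F k := by
    intro k
    simp only [hfdef, Finsupp.lsum_single, LinearMap.toSpanSingleton_apply, one_smul]
  have hprop : ∀ x y : ℤ →₀ ℂ, c x y = lam * virOmega x y + f (wittBracket x y) := by
    have hext : c = lam • virOmega + LinearMap.compr₂ wittBracket f := by
      ext m n
      simp only [LinearMap.coe_comp, Function.comp_apply, Finsupp.lsingle_apply,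
        LinearMap.add_apply, LinearMap.smul_apply, LinearMap.compr₂_apply, smul_eq_mul]
      rw [om_single, wb_single, map_smul, smul_eq_mul, hf]
      exact hmain m n
    intro x y
    rw [hext]
    rfl
  refine ⟨(lam, f), hprop, ?_⟩
  rintro ⟨lam2, f2⟩ h2
  dsimp only at h2
  have e : ∀ m n : ℤ,
      lam2 * (if m + n = 0 then ((m ^ 3 - m : ℤ) : ℂ) else 0)
        + ((m:ℂ) - n) * f2 (Finsupp.single (m+n) 1)
      = lam * (if m + n = 0 then ((m ^ 3 - m : ℤ) : ℂ) else 0)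
        + ((m:ℂ) - n) * f (Finsupp.single (m+n) 1) := by
    intro m n
    have a1 := hprop (Finsupp.single m 1) (Finsupp.single n 1)
    have a2 := h2 (Finsupp.single m 1) (Finsupp.single n 1)
    rw [om_single, wb_single, map_smul, smul_eq_mul] at a1 a2
    exact a2.symm.trans a1
  have h0 : f2 (Finsupp.single 0 1) = f (Finsupp.single 0 1) := by
    have h := e 1 (-1)
    rw [show ((1:ℤ) + -1) = 0 by norm_num, if_pos rfl,
      show (((1:ℤ)^3 - 1 : ℤ) : ℂ) = 0 by norm_num] at h
    push_cast at h
    linear_combination h / 2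
  have hl : lam2 = lam := by
    have h := e 2 (-2)
    rw [show ((2:ℤ) + -2) = 0 by norm_num, if_pos rfl,
      show (((2:ℤ)^3 - 2 : ℤ) : ℂ) = 6 by norm_num] at h
    push_cast at h
    linear_combination h / 6 - (2/3) * h0
  have hfk : ∀ k : ℤ, f2 (Finsupp.single k 1) = f (Finsupp.single k 1) := by
    intro k
    rcases eq_or_ne k 0 with rfl | hk
    · exact h0
    · have h := e k 0
      rw [add_zero, if_neg hk] at h
      have hne : (k:ℂ) ≠ 0 := Int.cast_ne_zero.mpr hk
      simp only [mul_zero, zero_add, Int.cast_zero, sub_zero] at h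
      exact mul_left_cancel₀ hne h
  have hfe : f2 = f := by
    ext k
    exact hfk k
  rw [Prod.mk.injEq]
  exact ⟨hl, hfe⟩
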